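/- Let T be the bilateral weighted backward shift on c00(ℤ) with weights w(k) = 2 for k > 0 and w(k) = 1/2 for k ≤ 0, i.e. T((x_n))_n = 2x_{n+1} for n ≥ 0 and (1/2)x_{n+1} for n < 0. Then for every ε > 0, n ∈ ℕ, m ∈ ℕ and δ > 0, the sequence (x_j)_{j∈ℕ₀} defined by x_j(i) = ε·2^{-|i|} for m+1−j ≤ i ≤ m+1 and 0 otherwise, satisfies ‖T x_j − x_{j+1}‖_m < δ for all j whenever ε·2^{-m-1} < δ, and no point x ∈ c00(ℤ) satisfies ‖x_j − T^j x‖_n < ε for all j ∈ ℕ₀. -/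

import Mathlib

/-- The seminorm `‖x‖_n = max_{|k| ≤ n} |x k|` on sequences over `ℤ`. -/
noncomputable def pn (n : ℕ) (x : ℤ → ℝ) : ℝ :=
  (Finset.Icc (-(n : ℤ)) n).sup' ⟨0, by simp⟩ (fun k => |x k|)

/-- The bilateral weighted backward shift with weights `w k = 2` for `k > 0` and
`w k = 1/2` for `k ≤ 0`, i.e. `(T x) n = 2 x(n+1)` for `n ≥ 0` and `(1/2) x(n+1)` for `n < 0`. -/
noncomputable def Tfun (x : ℤ → ℝ) : ℤ → ℝ :=
  fun n => (if 0 ≤ n then (2 : ℝ) else (1 / 2 : ℝ)) * x (n + 1)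

lemma Tfun_iter (y : ℤ → ℝ) : ∀ (j : ℕ) (k : ℤ), 0 ≤ k →
    (Tfun^[j] y) k = 2 ^ j * y (k + j) := by
  intro j
  induction j with
  | zero => intro k hk; simp
  | succ j ih =>
    intro k hk
    rw [Function.iterate_succ_apply']
    show (if 0 ≤ k then (2 : ℝ) else (1 / 2 : ℝ)) * (Tfun^[j] y) (k + 1) = _
    rw [if_pos hk, ih (k + 1) (by omega)]
    have : k + 1 + (j : ℤ) = k + ((j : ℕ) + 1 : ℕ) := by push_cast; ring
    rw [this, pow_succ]
    ring

/-- The explicit pseudotrajectory `x_j(i) = ε 2^{-|i|}` for `m+1-j ≤ i ≤ m+1`, `0` otherwise,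
is a `δ`-pseudotrajectory (w.r.t. `‖·‖_m`) whenever `ε 2^{-m-1} < δ`, and no finitely
supported point `‖·‖_n`-`ε`-shadows it. -/
theorem stmt1 (ε : ℝ) (hε : 0 < ε) (n m : ℕ) (δ : ℝ) (hδ : 0 < δ)
    (x : ℕ → ℤ → ℝ)
    (hx : ∀ (j : ℕ) (i : ℤ),
      x j i = if (m : ℤ) + 1 - (j : ℤ) ≤ i ∧ i ≤ (m : ℤ) + 1 then ε * (2 : ℝ) ^ (-|i|) else 0) :
    (ε * (2 : ℝ) ^ (-((m : ℤ) + 1)) < δ → ∀ j : ℕ, pn m (Tfun (x j) - x (j + 1)) < δ) ∧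
    ¬ ∃ y : ℤ → ℝ, (Function.support y).Finite ∧ ∀ j : ℕ, pn n (x j - Tfun^[j] y) < ε := by
  constructor
  · intro _ j
    unfold pn
    apply (Finset.sup'_lt_iff ..).mpr
    intro k hk
    rw [Finset.mem_Icc] at hk
    have hzero : (Tfun (x j) - x (j + 1)) k = 0 := by
      show Tfun (x j) k - x (j + 1) k = 0
      unfold Tfun
      rw [hx j (k + 1), hx (j + 1) k]
      push_cast
      rcases le_or_gt 0 k with h0 | h0
      · rw [if_pos h0, abs_of_nonneg (by omega : (0:ℤ) ≤ k + 1), abs_of_nonneg h0]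
        split_ifs with h1 h2 h2
        · have : -(k + 1) = -k + (-1) := by ring
          rw [this, zpow_add₀ (by norm_num : (2:ℝ) ≠ 0)]
          norm_num; ring
        · omega
        · omega
        · ring
      · rw [if_neg (by omega), abs_of_nonpos (by omega : k + 1 ≤ 0), abs_of_neg h0]
        split_ifs with h1 h2 h2
        · have : -(-(k + 1)) = -(-k) + 1 := by ring
          rw [this, zpow_add₀ (by norm_num : (2:ℝ) ≠ 0)]
          norm_num; ring
        · omega
        · omega
        · ring
    rw [hzero]
    simpa using hδ
  · rintro ⟨y, hfin, hsh⟩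
    obtain ⟨b, hb⟩ := hfin.bddAbove
    obtain ⟨jn, hjn⟩ := exists_nat_ge b
    set j : ℕ := m + jn + 1 with hj
    have hle : |(x j - Tfun^[j] y) 0| ≤ pn n (x j - Tfun^[j] y) := by
      unfold pn
      exact Finset.le_sup' (fun k => |(x j - Tfun^[j] y) k|)
        (by simp : (0:ℤ) ∈ Finset.Icc (-(n:ℤ)) n)
    have hyj : y (j : ℤ) = 0 := by
      by_contra h
      have : (j : ℤ) ≤ b := hb h
      have : (b : ℤ) < j := by push_cast; omega
      omega
    have hval : (x j - Tfun^[j] y) 0 = ε := by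
      show x j 0 - (Tfun^[j] y) 0 = ε
      rw [Tfun_iter y j 0 le_rfl, hx j 0]
      rw [if_pos (by constructor <;> push_cast <;> omega)]
      simp [hyj]
    rw [hval, abs_of_pos hε] at hle
    exact absurd (hsh j) (not_lt.mpr hle)
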